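/- Let a monoid S act faithfully on a set X, and let (S_α)_{α∈Γ} be a co-decomposition of (X,S), with e ∈ S_α for every α. Then S = ⋃ { S_{i_1} S_{i_2} ⋯ S_{i_n} : n ≥ 1 and i_1, …, i_n ∈ Γ are pairwise distinct }, where S_{i_1}⋯S_{i_n} denotes the setwise product {s_1⋯s_n : s_j ∈ S_{i_j}}. -/

import Mathlib

open Pointwise

/-- The multi-transformation (co-decomposition) condition for a right action `act` of a
monoid `M` on `X` and a family of submonoids `Ssub : Γ → Submonoid M`: for pairwise
distinct indices `α₁, …, αₙ`, elements `sⱼ ∈ S_{αⱼ}` and every `x`, the value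
`x s₁ s₂ ⋯ sₙ` is unchanged under permuting the factors. -/
def MultiCond {M X Γ : Type*} [Monoid M] (act : X → M → X) (Ssub : Γ → Submonoid M) : Prop :=
  ∀ l l' : List (Γ × M), (l.map Prod.fst).Nodup → (∀ p ∈ l, p.2 ∈ Ssub p.1) →
    l.Perm l' → ∀ x : X, act x (l.map Prod.snd).prod = act x (l'.map Prod.snd).prod

/-- Key lemma: any nonempty product can be rewritten with distinct indices. -/
lemma key_lemma {M X Γ : Type*} [Monoid M] (act : X → M → X)
    (hact : ∀ x s t, act x (s * t) = act (act x s) t)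
    (hfaith : ∀ s t : M, (∀ x, act x s = act x t) → s = t)
    (Ssub : Γ → Submonoid M)
    (hmulti : MultiCond act Ssub) :
    ∀ l : List (Γ × M), l ≠ [] → (∀ p ∈ l, p.2 ∈ Ssub p.1) →
      ∃ l' : List (Γ × M), l' ≠ [] ∧ (l'.map Prod.fst).Nodup ∧
        (∀ p ∈ l', p.2 ∈ Ssub p.1) ∧
        (l'.map Prod.snd).prod = (l.map Prod.snd).prod := by
  intro l
  induction l with
  | nil => intro h; exact absurd rfl h
  | cons p rest ih =>
    intro _ hmem
    rcases eq_or_ne rest [] with rfl | hne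
    · exact ⟨[p], by simp, by simp, by simpa using hmem, rfl⟩
    · obtain ⟨l', hl'ne, hl'nd, hl'mem, hl'prod⟩ := ih hne (fun q hq => hmem q (List.mem_cons_of_mem _ hq))
      by_cases hp : p.1 ∈ l'.map Prod.fst
      · -- p.1 occurs in l'; merge
        obtain ⟨q, hq, hq1⟩ := List.mem_map.1 hp
        obtain ⟨a, b, rfl⟩ := List.append_of_mem hq
        have hperm : (a ++ q :: b).Perm (q :: (a ++ b)) := List.perm_middle
        have hstep := hmulti (a ++ q :: b) (q :: (a ++ b)) hl'nd hl'mem hperm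
        refine ⟨(p.1, p.2 * q.2) :: (a ++ b), by simp, ?_, ?_, ?_⟩
        · -- nodup
          have : ((a ++ q :: b).map Prod.fst).Perm ((q :: (a ++ b)).map Prod.fst) :=
            hperm.map Prod.fst
          have hnd2 := this.nodup_iff.1 hl'nd
          simpa [hq1] using hnd2
        · intro r hr
          rcases List.mem_cons.1 hr with h | hr
          · exact h ▸ mul_mem (hmem p (List.mem_cons_self)) (hq1 ▸ hl'mem q hq)
          · exact hl'mem r (by
              rcases List.mem_append.1 hr with h | h
              · exact List.mem_append.2 (Or.inl h)
              · exact List.mem_append.2 (Or.inr (List.mem_cons_of_mem _ h)))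
        · -- product equality via faithfulness
          apply hfaith
          intro x
          have hR : act x ((p :: rest).map Prod.snd).prod
              = act (act x p.2) ((a ++ q :: b).map Prod.snd).prod := by
            simp only [List.map_cons, List.prod_cons]
            rw [hact, ← hl'prod]
          rw [hR, hstep (act x p.2)]
          simp only [List.map_cons, List.prod_cons, hact]
      · refine ⟨p :: l', by simp, by simp [hp, hl'nd], ?_, ?_⟩
        · intro r hr
          rcases List.mem_cons.1 hr with h | hr
          · exact h ▸ hmem p (List.mem_cons_self)
          · exact hl'mem r hr
        · simp only [List.map_cons, List.prod_cons, hl'prod]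

/-- Membership of a product of members in a pointwise product of the submonoids. -/
lemma mem_prod_lemma {M Γ : Type*} [Monoid M] (Ssub : Γ → Submonoid M) :
    ∀ l : List (Γ × M), (∀ p ∈ l, p.2 ∈ Ssub p.1) →
      (l.map Prod.snd).prod ∈ (l.map (fun p => (Ssub p.1 : Set M))).prod := by
  intro l
  induction l with
  | nil => intro _; simp [Set.mem_one]
  | cons p rest ih =>
    intro hmem
    simp only [List.map_cons, List.prod_cons]
    exact Set.mul_mem_mul (hmem p (List.mem_cons_self))
      (ih fun q hq => hmem q (List.mem_cons_of_mem _ hq))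

/-- If a monoid `S` acts faithfully on `X` and `(S_α)_{α∈Γ}` is a
co-decomposition of `(X,S)`, then `S` is the union of the setwise products
`S_{i₁} S_{i₂} ⋯ S_{iₙ}` over all finite sequences of pairwise distinct indices. -/
theorem stmt5 {M X Γ : Type*} [Monoid M] (act : X → M → X)
    (hone : ∀ x, act x 1 = x)
    (hact : ∀ x s t, act x (s * t) = act (act x s) t)
    (hfaith : ∀ s t : M, (∀ x, act x s = act x t) → s = t)
    (Ssub : Γ → Submonoid M)
    (hdistinct : Function.Injective Ssub)
    (hgen : Subsemigroup.closure (⋃ α, (Ssub α : Set M)) = ⊤)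
    (hmulti : MultiCond act Ssub) :
    ∀ s : M, ∃ l : List Γ, l ≠ [] ∧ l.Nodup ∧
      s ∈ (l.map (fun α => (Ssub α : Set M))).prod := by
  intro s
  -- s is in the closure
  have hs : s ∈ Subsemigroup.closure (⋃ α, (Ssub α : Set M)) := by
    rw [hgen]; trivial
  -- extract a list representation
  have hrep : ∃ l : List (Γ × M), l ≠ [] ∧ (∀ p ∈ l, p.2 ∈ Ssub p.1) ∧
      (l.map Prod.snd).prod = s := by
    refine Subsemigroup.closure_induction (p := fun x _ => ∃ l : List (Γ × M), l ≠ [] ∧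
      (∀ p ∈ l, p.2 ∈ Ssub p.1) ∧ (l.map Prod.snd).prod = x) ?_ ?_ hs
    · intro x hx
      obtain ⟨_, ⟨α, rfl⟩, hx⟩ := hx
      exact ⟨[(α, x)], by simp, by simpa using hx, by simp⟩
    · rintro x y _ _ ⟨l₁, h₁ne, h₁mem, rfl⟩ ⟨l₂, h₂ne, h₂mem, rfl⟩
      refine ⟨l₁ ++ l₂, by simp [h₁ne], ?_, by simp⟩
      intro p hp
      rcases List.mem_append.1 hp with h | h
      · exact h₁mem p h
      · exact h₂mem p h
  obtain ⟨l, hlne, hlmem, hlprod⟩ := hrep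
  obtain ⟨l', hl'ne, hl'nd, hl'mem, hl'prod⟩ :=
    key_lemma act hact hfaith Ssub hmulti l hlne hlmem
  refine ⟨l'.map Prod.fst, by simpa using hl'ne, hl'nd, ?_⟩
  rw [List.map_map]
  have : s = (l'.map Prod.snd).prod := by rw [hl'prod, hlprod]
  rw [this]
  exact mem_prod_lemma Ssub l' hl'mem
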